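/- Let f : ℝⁿ → ℝ be differentiable, x ∈ Ω, μ̄ > 0, x̄ ∈ prox_{μ̄⁻¹g}(x − μ̄⁻¹∇f(x)) with x ≠ x̄, supp(x) = supp(x̄) and supp(Bx) = supp(Bx̄). Let b₁ > 0, σ ∈ (0,1/2), ς ∈ (σ,1], let G ∈ ℝ^{n×n} be symmetric with G ⪰ b₁‖μ̄(x − x̄)‖^σ I, set Π := Π(x), Θ(y) := f(x) + ⟨∇f(x), y − x⟩ + (1/2)⟨y − x, G(y − x)⟩ + δ_Π(y), let ŷ be the unique minimizer of Θ, and define R(y) := μ̄[y − proj_Π(y − μ̄⁻¹(G(y − x) + ∇f(x)))]. Then there exists δ > 0 such that for every y ∈ ℝⁿ with ‖y − ŷ‖ < δ, the point y′ := y − μ̄⁻¹R(y) (which lies in Π) satisfies Θ(y′) ≤ Θ(x) and dist(0, ∂Θ(y′)) ≤ (min{μ̄⁻¹, 1}/2) · min{‖μ̄(x − x̄)‖, ‖μ̄(x − x̄)‖^{1+ς}}, where for z ∈ Π, ∂Θ(z) := ∇f(x) + G(z − x) + N_Π(z). -/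

import Mathlib

open scoped Classical RealInnerProductSpace

noncomputable section

/-- Identity reinterpretation of a coordinate vector as a point of Euclidean space. -/
def toEuc {n : ℕ} (v : Fin n → ℝ) : EuclideanSpace ℝ (Fin n) := WithLp.toLp 2 v

/-- The box `Ω = {x : l ≤ x ≤ u}` in ℝⁿ. -/
def Om {n : ℕ} (l u : Fin n → ℝ) : Set (EuclideanSpace ℝ (Fin n)) :=
  {x | ∀ i, l i ≤ x i ∧ x i ≤ u i}

/-- The ℓ₀-norm (number of nonzero entries) of a vector. -/
def zeroNorm {m : ℕ} (v : Fin m → ℝ) : ℕ := (Function.support v).ncard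

/-- `prox_{μ⁻¹ g}(z)`: the set of minimizers of `(μ/2)‖·−z‖² + λ₁‖B·‖₀ + λ₂‖·‖₀` over Ω. -/
def proxSet {n p : ℕ} (B : Matrix (Fin p) (Fin n) ℝ) (lam1 lam2 : ℝ) (l u : Fin n → ℝ)
    (μ : ℝ) (z : EuclideanSpace ℝ (Fin n)) : Set (EuclideanSpace ℝ (Fin n)) :=
  {x | x ∈ Om l u ∧ ∀ y ∈ Om l u,
    μ / 2 * ‖x - z‖ ^ 2 + lam1 * (zeroNorm (B.mulVec x) : ℝ) + lam2 * (zeroNorm x : ℝ) ≤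
    μ / 2 * ‖y - z‖ ^ 2 + lam1 * (zeroNorm (B.mulVec y) : ℝ) + lam2 * (zeroNorm y : ℝ)}

/-- `Π(z) = {x ∈ Ω : supp(x) ⊆ supp(z), supp(Bx) ⊆ supp(Bz)}`. -/
def PiSet {n p : ℕ} (B : Matrix (Fin p) (Fin n) ℝ) (l u : Fin n → ℝ)
    (z : EuclideanSpace ℝ (Fin n)) : Set (EuclideanSpace ℝ (Fin n)) :=
  {x | x ∈ Om l u ∧ Function.support x ⊆ Function.support z ∧
    Function.support (B.mulVec x) ⊆ Function.support (B.mulVec z)}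

/-- Normal cone of a convex set `S` at `x`. -/
def normalCone {n : ℕ} (S : Set (EuclideanSpace ℝ (Fin n)))
    (x : EuclideanSpace ℝ (Fin n)) : Set (EuclideanSpace ℝ (Fin n)) :=
  {v | ∀ y ∈ S, (inner ℝ v (y - x) : ℝ) ≤ 0}

/-- The Euclidean projection onto a (nonempty closed convex) set `S`. -/
def projCC {n : ℕ} (S : Set (EuclideanSpace ℝ (Fin n))) (w : EuclideanSpace ℝ (Fin n)) :
    EuclideanSpace ℝ (Fin n) :=
  Classical.epsilon (fun y => y ∈ S ∧ ∀ z ∈ S, ‖y - w‖ ≤ ‖z - w‖)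

/-- `Θ(y) = f(x) + ⟨∇f(x), y−x⟩ + (1/2)⟨y−x, G(y−x)⟩ + δ_{Π(x)}(y)`. -/
def ThetaFun {n p : ℕ} (B : Matrix (Fin p) (Fin n) ℝ) (l u : Fin n → ℝ)
    (f : EuclideanSpace ℝ (Fin n) → ℝ) (G : Matrix (Fin n) (Fin n) ℝ)
    (x y : EuclideanSpace ℝ (Fin n)) : EReal :=
  if y ∈ PiSet B l u x then
    ((f x + (inner ℝ (gradient f x) (y - x) : ℝ)
      + (1 : ℝ) / 2 * (inner ℝ (y - x) ((WithLp.toLp 2 (G.mulVec (y - x)) : EuclideanSpace ℝ (Fin n))) : ℝ) : ℝ)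
      : EReal)
  else ⊤

lemma aux_limit (c k : ℝ) (h : ∀ t : ℝ, 0 < t → t ≤ 1 → 0 ≤ c + t * k) : 0 ≤ c := by
  by_contra hc
  push_neg at hc
  set t := min 1 ((-c) / (|k| + 1)) with ht
  have h1 : 0 < t := lt_min one_pos (div_pos (by linarith) (by positivity))
  have h2 : t ≤ 1 := min_le_left _ _
  have h3 : t ≤ (-c)/(|k|+1) := min_le_right _ _
  have h4 := h t h1 h2
  have h5 : t * (|k| + 1) ≤ -c := (le_div_iff₀ (by positivity)).mp h3
  have h6 : t * k ≤ t * |k| := by nlinarith [le_abs_self k]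
  nlinarith [abs_nonneg k]

lemma aux_limit2 (c k : ℝ) (h : ∀ t : ℝ, 0 < t → t ≤ 1 → 0 ≤ t * c + t ^ 2 * k) : 0 ≤ c := by
  refine aux_limit c k fun t ht0 ht1 => ?_
  have h4 := h t ht0 ht1
  by_contra hc
  push_neg at hc
  nlinarith

lemma projCC_spec {n : ℕ} {S : Set (EuclideanSpace ℝ (Fin n))} (hne : S.Nonempty)
    (hcpt : IsCompact S) (w : EuclideanSpace ℝ (Fin n)) :
    projCC S w ∈ S ∧ ∀ z ∈ S, ‖projCC S w - w‖ ≤ ‖z - w‖ := by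
  have hcont : Continuous (fun z : EuclideanSpace ℝ (Fin n) => ‖z - w‖) := by continuity
  obtain ⟨y, hyS, hy⟩ := hcpt.exists_isMinOn hne hcont.continuousOn
  exact Classical.epsilon_spec (p := fun y => y ∈ S ∧ ∀ z ∈ S, ‖y - w‖ ≤ ‖z - w‖)
    ⟨y, hyS, fun z hz => hy hz⟩

lemma projCC_VI {n : ℕ} {S : Set (EuclideanSpace ℝ (Fin n))} (hne : S.Nonempty)
    (hcpt : IsCompact S) (hconv : Convex ℝ S) (w : EuclideanSpace ℝ (Fin n)) :
    ∀ z ∈ S, ⟪w - projCC S w, z - projCC S w⟫ ≤ 0 := by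
  obtain ⟨hmem, hmin⟩ := projCC_spec hne hcpt w
  set p := projCC S w with hp
  intro z hz
  have key : ∀ t : ℝ, 0 < t → t ≤ 1 → 0 ≤ (2 * ⟪p - w, z - p⟫) + t * ‖z - p‖ ^ 2 := by
    intro t ht0 ht1
    have hmemt : p + t • (z - p) ∈ S := by
      have hc := hconv hmem hz (by linarith : (0:ℝ) ≤ 1 - t) (le_of_lt ht0) (by ring)
      have : (1 - t) • p + t • z = p + t • (z - p) := by
        rw [smul_sub, sub_smul, one_smul]; abel
      rwa [this] at hc
    have h := hmin _ hmemt
    have hsq : ‖p - w‖ ^ 2 ≤ ‖(p - w) + t • (z - p)‖ ^ 2 := by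
      have he : p + t • (z - p) - w = (p - w) + t • (z - p) := by abel
      rw [← he]
      exact pow_le_pow_left₀ (norm_nonneg _) h 2
    rw [norm_add_sq_real, real_inner_smul_right, norm_smul, mul_pow] at hsq
    have : ‖t‖ ^ 2 = t ^ 2 := by rw [Real.norm_eq_abs, sq_abs]
    rw [this] at hsq
    have h2 : 0 ≤ t * ((2 * ⟪p - w, z - p⟫) + t * ‖z - p‖ ^ 2) := by nlinarith
    by_contra hcon
    push_neg at hcon
    nlinarith
  have h0 := aux_limit _ _ key
  have : ⟪w - p, z - p⟫ = - ⟪p - w, z - p⟫ := by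
    rw [← inner_neg_left]; congr 1; abel
  rw [this]; linarith

lemma projCC_lip {n : ℕ} {S : Set (EuclideanSpace ℝ (Fin n))} (hne : S.Nonempty)
    (hcpt : IsCompact S) (hconv : Convex ℝ S) (w1 w2 : EuclideanSpace ℝ (Fin n)) :
    ‖projCC S w1 - projCC S w2‖ ≤ ‖w1 - w2‖ := by
  set p1 := projCC S w1
  set p2 := projCC S w2
  have h1 : ⟪w1 - p1, p2 - p1⟫ ≤ 0 := projCC_VI hne hcpt hconv w1 _ (projCC_spec hne hcpt w2).1
  have h2 : ⟪w2 - p2, p1 - p2⟫ ≤ 0 := projCC_VI hne hcpt hconv w2 _ (projCC_spec hne hcpt w1).1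
  have hsplit : ⟪p1 - p2, p1 - p2⟫ =
      ⟪p1 - w1, p1 - p2⟫ + ⟪w1 - w2, p1 - p2⟫ + ⟪w2 - p2, p1 - p2⟫ := by
    rw [← inner_add_left, ← inner_add_left]; congr 1; abel
  have h3 : ⟪p1 - w1, p1 - p2⟫ = ⟪w1 - p1, p2 - p1⟫ := by
    rw [show p1 - w1 = -(w1 - p1) by abel, show p1 - p2 = -(p2 - p1) by abel, inner_neg_neg]
  have h4 : ‖p1 - p2‖ ^ 2 ≤ ‖w1 - w2‖ * ‖p1 - p2‖ := by
    rw [← real_inner_self_eq_norm_sq]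
    calc ⟪p1 - p2, p1 - p2⟫ ≤ ⟪w1 - w2, p1 - p2⟫ := by rw [hsplit, h3]; linarith
      _ ≤ ‖w1 - w2‖ * ‖p1 - p2‖ := real_inner_le_norm _ _
  rcases eq_or_lt_of_le (norm_nonneg (p1 - p2)) with h5 | h5
  · rw [← h5]; exact norm_nonneg _
  · nlinarith

lemma projCC_fix {n : ℕ} {S : Set (EuclideanSpace ℝ (Fin n))} (hne : S.Nonempty)
    (hcpt : IsCompact S) (hconv : Convex ℝ S) (w yh : EuclideanSpace ℝ (Fin n)) (hyh : yh ∈ S)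
    (hVI : ∀ z ∈ S, ⟪w - yh, z - yh⟫ ≤ 0) : projCC S w = yh := by
  set p := projCC S w
  have h1 : ⟪w - p, yh - p⟫ ≤ 0 := projCC_VI hne hcpt hconv w _ hyh
  have h2 : ⟪w - yh, p - yh⟫ ≤ 0 := hVI _ (projCC_spec hne hcpt w).1
  have hsplit : ⟪yh - p, yh - p⟫ = ⟪yh - w, yh - p⟫ + ⟪w - p, yh - p⟫ := by
    rw [← inner_add_left]; congr 1; abel
  have h3 : ⟪yh - w, yh - p⟫ = ⟪w - yh, p - yh⟫ := by
    rw [show yh - w = -(w - yh) by abel, show yh - p = -(p - yh) by abel, inner_neg_neg]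
  have h4 : ‖yh - p‖ ^ 2 ≤ 0 := by
    rw [← real_inner_self_eq_norm_sq, hsplit, h3]; linarith
  have h5 : yh - p = 0 := by
    have h6 := norm_nonneg (yh - p)
    have h7 : ‖yh - p‖ = 0 := by nlinarith
    exact norm_eq_zero.mp h7
  have : yh = p := by rwa [sub_eq_zero] at h5
  exact this.symm

lemma supp_subset_iff {n : ℕ} (x y : Fin n → ℝ) :
    Function.support y ⊆ Function.support x ↔ ∀ i, x i = 0 → y i = 0 := by
  constructor
  · intro h i hxi
    by_contra hyi
    exact (h hyi) hxi
  · intro h i hi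
    intro hxi
    exact hi (h i hxi)

lemma symm_inner {n : ℕ} {G : Matrix (Fin n) (Fin n) ℝ} (hG : G.IsSymm)
    (u v : EuclideanSpace ℝ (Fin n)) :
    ⟪u, toEuc (G.mulVec v)⟫ = ⟪v, toEuc (G.mulVec u)⟫ := by
  simp only [PiLp.inner_apply, RCLike.inner_apply, conj_trivial, toEuc, Matrix.mulVec,
    dotProduct, Finset.mul_sum, Finset.sum_mul]
  rw [Finset.sum_comm]
  refine Finset.sum_congr rfl fun i _ => Finset.sum_congr rfl fun j _ => ?_
  rw [hG.apply i j]
  ring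

set_option maxHeartbeats 1000000 in
/-- near the unique minimizer `ŷ` of the projected regularized Newton
subproblem, the point `y′ = y − μ̄⁻¹R(y)` (which lies in `Π = Π(x)`) satisfies the two
inexactness criteria `Θ(y′) ≤ Θ(x)` and
`dist(0, ∂Θ(y′)) ≤ (min{μ̄⁻¹,1}/2)·min{‖μ̄(x−x̄)‖, ‖μ̄(x−x̄)‖^{1+ς}}`,
where `R(y) = μ̄[y − proj_Π(y − μ̄⁻¹(G(y−x) + ∇f(x)))]` and
`∂Θ(z) = ∇f(x) + G(z−x) + N_Π(z)`. -/
theorem stmt10 {n p : ℕ} (B : Matrix (Fin p) (Fin n) ℝ) (lam1 lam2 : ℝ)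
    (hlam1 : 0 < lam1) (hlam2 : 0 < lam2)
    (l u : Fin n → ℝ) (hl : ∀ i, l i ≤ 0) (hu : ∀ i, 0 ≤ u i)
    (f : EuclideanSpace ℝ (Fin n) → ℝ) (hf : Differentiable ℝ f)
    (x : EuclideanSpace ℝ (Fin n)) (hx : x ∈ Om l u)
    (mubar : ℝ) (hmubar : 0 < mubar)
    (xbar : EuclideanSpace ℝ (Fin n))
    (hxbar : xbar ∈ proxSet B lam1 lam2 l u mubar (x - mubar⁻¹ • gradient f x))
    (hne : x ≠ xbar)
    (hsupp : Function.support x = Function.support xbar)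
    (hsuppB : Function.support (B.mulVec x) = Function.support (B.mulVec xbar))
    (b1 σ ς : ℝ) (hb1 : 0 < b1) (hσ : 0 < σ ∧ σ < 1 / 2) (hς : σ < ς ∧ ς ≤ 1)
    (G : Matrix (Fin n) (Fin n) ℝ) (hGsym : G.IsSymm)
    (hG : (G - (b1 * ‖mubar • (x - xbar)‖ ^ σ) • (1 : Matrix (Fin n) (Fin n) ℝ)).PosSemidef)
    (R : EuclideanSpace ℝ (Fin n) → EuclideanSpace ℝ (Fin n))
    (hR : ∀ y, R y = mubar • (y - projCC (PiSet B l u x)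
      (y - mubar⁻¹ • (toEuc (G.mulVec (y - x)) + gradient f x))))
    (yhat : EuclideanSpace ℝ (Fin n)) (hyhatmem : yhat ∈ PiSet B l u x)
    (hyhat : ∀ w : EuclideanSpace ℝ (Fin n), ThetaFun B l u f G x yhat ≤ ThetaFun B l u f G x w) :
    ∃ δ > (0 : ℝ), ∀ y : EuclideanSpace ℝ (Fin n), ‖y - yhat‖ < δ →
      ∀ y' : EuclideanSpace ℝ (Fin n), y' = y - mubar⁻¹ • R y →
        y' ∈ PiSet B l u x ∧
        ThetaFun B l u f G x y' ≤ ThetaFun B l u f G x x ∧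
        Metric.infDist (0 : EuclideanSpace ℝ (Fin n))
            {v | ∃ w ∈ normalCone (PiSet B l u x) y',
              v = gradient f x + toEuc (G.mulVec (y' - x)) + w} ≤
          min mubar⁻¹ 1 / 2 *
            min ‖mubar • (x - xbar)‖ (‖mubar • (x - xbar)‖ ^ (1 + ς)) := by
  classical
  set S := PiSet B l u x with hSdef
  -- membership of x and xbar
  have hxS : x ∈ S := ⟨hx, subset_rfl, subset_rfl⟩
  have hxbarS : xbar ∈ S := ⟨hxbar.1, hsupp.symm.subset, hsuppB.symm.subset⟩
  have hne' : S.Nonempty := ⟨x, hxS⟩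
  -- convexity
  have hconv : Convex ℝ S := by
    rintro y₁ ⟨h1, h2, h3⟩ y₂ ⟨h4, h5, h6⟩ a b ha hb hab
    rw [supp_subset_iff] at h2 h5
    rw [supp_subset_iff] at h3 h6
    refine ⟨fun i => ?_, ?_, ?_⟩
    · obtain ⟨e1, e2⟩ := h1 i
      obtain ⟨e3, e4⟩ := h4 i
      have : (a • y₁ + b • y₂) i = a * y₁ i + b * y₂ i := rfl
      rw [this]
      have hli : l i = a * l i + b * l i := by rw [← add_mul, hab, one_mul]
      have hui : u i = a * u i + b * u i := by rw [← add_mul, hab, one_mul]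
      constructor
      · rw [hli]
        exact add_le_add (mul_le_mul_of_nonneg_left e1 ha) (mul_le_mul_of_nonneg_left e3 hb)
      · rw [hui]
        exact add_le_add (mul_le_mul_of_nonneg_left e2 ha) (mul_le_mul_of_nonneg_left e4 hb)
    · rw [supp_subset_iff]
      intro i hxi
      have : (a • y₁ + b • y₂) i = a * y₁ i + b * y₂ i := rfl
      rw [this, h2 i hxi, h5 i hxi]; ring
    · rw [supp_subset_iff]
      intro j hxj
      have : B.mulVec (a • y₁ + b • y₂) = a • B.mulVec y₁ + b • B.mulVec y₂ := by
        rw [Matrix.mulVec_add, Matrix.mulVec_smul, Matrix.mulVec_smul]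
      rw [WithLp.ofLp_add, WithLp.ofLp_smul, WithLp.ofLp_smul, this]
      have : (a • B.mulVec y₁ + b • B.mulVec y₂) j = a * B.mulVec y₁ j + b * B.mulVec y₂ j := rfl
      rw [this, h3 j hxj, h6 j hxj]; ring
  -- closedness
  have hev : ∀ i, Continuous fun y : (EuclideanSpace ℝ (Fin n)) => y i := fun i => (EuclideanSpace.proj (𝕜 := ℝ) i).continuous
  have hevB : ∀ j, Continuous fun y : (EuclideanSpace ℝ (Fin n)) => B.mulVec y j := by
    intro j
    have : (fun y : (EuclideanSpace ℝ (Fin n)) => B.mulVec y j) = fun y : (EuclideanSpace ℝ (Fin n)) => ∑ i, B j i * y i := rfl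
    rw [this]
    exact continuous_finset_sum _ fun i _ => (continuous_const.mul (hev i))
  have hclosed : IsClosed S := by
    have hrw : S = (⋂ i, ((fun y : (EuclideanSpace ℝ (Fin n)) => y i) ⁻¹' Set.Icc (l i) (u i))) ∩
        ((⋂ i ∈ {i | x i = 0}, (fun y : (EuclideanSpace ℝ (Fin n)) => y i) ⁻¹' {0}) ∩
         (⋂ j ∈ {j | B.mulVec x j = 0}, (fun y : (EuclideanSpace ℝ (Fin n)) => B.mulVec y j) ⁻¹' {0})) := by
      ext y
      simp only [Set.mem_inter_iff, Set.mem_iInter, Set.mem_preimage, Set.mem_Icc,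
        Set.mem_setOf_eq, Set.mem_singleton_iff]
      constructor
      · rintro ⟨h1, h2, h3⟩
        exact ⟨fun i => h1 i, fun i hi => (supp_subset_iff _ _).mp h2 i hi,
          fun j hj => (supp_subset_iff _ _).mp h3 j hj⟩
      · rintro ⟨h1, h2, h3⟩
        exact ⟨fun i => h1 i, (supp_subset_iff _ _).mpr h2, (supp_subset_iff _ _).mpr h3⟩
    rw [hrw]
    refine IsClosed.inter (isClosed_iInter fun i => (isClosed_Icc).preimage (hev i))
      (IsClosed.inter ?_ ?_)
    · exact isClosed_biInter fun i _ => isClosed_singleton.preimage (hev i)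
    · exact isClosed_biInter fun j _ => isClosed_singleton.preimage (hevB j)
  -- boundedness & compactness
  have hbdd : Bornology.IsBounded S := by
    rw [isBounded_iff_forall_norm_le]
    refine ⟨Real.sqrt (∑ i, max ((l i) ^ 2) ((u i) ^ 2)), fun y hy => ?_⟩
    rw [EuclideanSpace.norm_eq]
    apply Real.sqrt_le_sqrt
    refine Finset.sum_le_sum fun i _ => ?_
    have h1 := (hy.1 i).1
    have h2 := (hy.1 i).2
    have h3 : ‖y i‖ ^ 2 = (y i) ^ 2 := by rw [Real.norm_eq_abs, sq_abs]
    rw [h3]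
    rcases le_total 0 (y i) with h | h
    · exact le_max_of_le_right (by nlinarith)
    · exact le_max_of_le_left (by nlinarith)
  have hcpt : IsCompact S := Metric.isCompact_of_isClosed_isBounded hclosed hbdd
  -- the linear map Gc
  set Gc : (EuclideanSpace ℝ (Fin n)) →ₗ[ℝ] (EuclideanSpace ℝ (Fin n)) :=
    { toFun := fun v => toEuc (G.mulVec v)
      map_add' := fun v w => by
        show toEuc (G.mulVec (v + w)) = toEuc (G.mulVec v) + toEuc (G.mulVec w)
        simp only [toEuc]
        exact congrArg (WithLp.toLp 2) (Matrix.mulVec_add G v w)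
      map_smul' := fun c v => by
        show toEuc (G.mulVec (c • v)) = c • toEuc (G.mulVec v)
        simp only [toEuc]
        exact congrArg (WithLp.toLp 2) (Matrix.mulVec_smul G c v) } with hGcdef
  have hGc : ∀ v : (EuclideanSpace ℝ (Fin n)), Gc v = toEuc (G.mulVec v) := fun v => rfl
  have hGccont : Continuous fun v : (EuclideanSpace ℝ (Fin n)) => Gc v := Gc.continuous_of_finiteDimensional
  -- quadratic model
  set q : (EuclideanSpace ℝ (Fin n)) → ℝ := fun y => f x + ⟪gradient f x, y - x⟫ + 1 / 2 * ⟪y - x, Gc (y - x)⟫ with hqdef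
  have hΘ : ∀ y ∈ S, ThetaFun B l u f G x y = ((q y : ℝ) : EReal) := by
    intro y hy
    simp only [ThetaFun, if_pos (show y ∈ PiSet B l u x from hy)]
    rfl
  have hqx : q x = f x := by
    simp only [hqdef, sub_self, inner_zero_right, inner_zero_left, map_zero, mul_zero]
    ring
  have hqcont : Continuous q := by
    apply Continuous.add
    · exact continuous_const.add ((Continuous.inner continuous_const
        (continuous_id.sub continuous_const)))
    · exact continuous_const.mul (Continuous.inner (continuous_id.sub continuous_const)
        (hGccont.comp (continuous_id.sub continuous_const)))
  -- expansion lemma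
  have hq_expand : ∀ w e : (EuclideanSpace ℝ (Fin n)), ∀ t : ℝ, q (w + t • e) =
      q w + t * (⟪gradient f x, e⟫ + ⟪w - x, Gc e⟫) + t ^ 2 * (1 / 2 * ⟪e, Gc e⟫) := by
    intro w e t
    have hwe : w + t • e - x = (w - x) + t • e := by abel
    have hsymm : ⟪e, Gc (w - x)⟫ = ⟪w - x, Gc e⟫ := by
      rw [hGc, hGc]; exact symm_inner hGsym e (w - x)
    simp only [hqdef, hwe, inner_add_right, inner_add_left, map_add, map_smul,
      real_inner_smul_left, real_inner_smul_right]
    linear_combination (t / 2) * hsymm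
  -- step B : descent direction
  set d : (EuclideanSpace ℝ (Fin n)) := xbar - x with hddef
  have hdne : d ≠ 0 := sub_ne_zero.mpr (Ne.symm hne)
  have hdnorm : 0 < ‖d‖ := norm_pos_iff.mpr hdne
  set a : ℝ := ⟪gradient f x, d⟫ with hadef
  have ha : a ≤ -(mubar / 2) * ‖d‖ ^ 2 := by
    have hkey := hxbar.2 x hx
    have hz1 : zeroNorm xbar = zeroNorm x := by
      simp only [zeroNorm]; rw [hsupp]
    have hz2 : zeroNorm (B.mulVec xbar) = zeroNorm (B.mulVec x) := by
      simp only [zeroNorm]; rw [hsuppB]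
    rw [hz1, hz2] at hkey
    have hn : ‖xbar - (x - mubar⁻¹ • gradient f x)‖ ^ 2 ≤
        ‖x - (x - mubar⁻¹ • gradient f x)‖ ^ 2 := by nlinarith
    have he1 : xbar - (x - mubar⁻¹ • gradient f x) = d + mubar⁻¹ • gradient f x := by
      rw [hddef]; abel
    have he2 : x - (x - mubar⁻¹ • gradient f x) = mubar⁻¹ • gradient f x := by abel
    rw [he1, he2, norm_add_sq_real, real_inner_smul_right] at hn
    have hinv : mubar * mubar⁻¹ = 1 := mul_inv_cancel₀ hmubar.ne'
    have hcomm : ⟪d, gradient f x⟫ = a := real_inner_comm _ _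
    rw [hcomm] at hn
    have hn2 : mubar * (mubar⁻¹ * a) = a := by rw [← mul_assoc, hinv, one_mul]
    have h4 : mubar⁻¹ * a ≤ -(‖d‖ ^ 2 / 2) := by linarith
    have h5 : mubar * (mubar⁻¹ * a) ≤ mubar * -(‖d‖ ^ 2 / 2) :=
      mul_le_mul_of_nonneg_left h4 hmubar.le
    rw [hn2] at h5
    exact h5.trans_eq (by ring)
  have ha0 : a < 0 := by nlinarith [mul_pos hmubar (pow_pos hdnorm 2)]
  -- step C : strict decrease point
  set b : ℝ := ⟪d, Gc d⟫ with hbdef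
  set t : ℝ := min 1 ((-a) / (|b| + 1)) with htdef
  have ht0 : 0 < t := lt_min one_pos (div_pos (by linarith) (by positivity))
  have ht1 : t ≤ 1 := min_le_left _ _
  have ht2 : t * (|b| + 1) ≤ -a :=
    (le_div_iff₀ (by positivity)).mp (min_le_right 1 ((-a) / (|b| + 1)))
  have hxtd : x + t • d ∈ S := by
    have hc := hconv hxS hxbarS (by linarith : (0:ℝ) ≤ 1 - t) (le_of_lt ht0) (by ring)
    have : (1 - t) • x + t • xbar = x + t • d := by
      rw [hddef, smul_sub, sub_smul, one_smul]; abel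
    rwa [this] at hc
  have hqtd : q (x + t • d) < f x := by
    rw [hq_expand x d t]
    rw [hqx]
    have h0 : ⟪x - x, Gc d⟫ = 0 := by rw [sub_self, inner_zero_left]
    rw [h0]
    have hb1 : b ≤ |b| := le_abs_self b
    nlinarith [abs_nonneg b, sq_nonneg t]
  -- q yhat < f x
  have hqyhat : q yhat < f x := by
    have h := hyhat (x + t • d)
    rw [hΘ yhat hyhatmem, hΘ _ hxtd, EReal.coe_le_coe_iff] at h
    linarith
  -- first order optimality of yhat
  have hVIyhat : ∀ z ∈ S, 0 ≤ ⟪gradient f x + Gc (yhat - x), z - yhat⟫ := by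
    intro z hz
    set e : (EuclideanSpace ℝ (Fin n)) := z - yhat with hedef
    have key : ∀ s : ℝ, 0 < s → s ≤ 1 →
        0 ≤ s * (⟪gradient f x, e⟫ + ⟪yhat - x, Gc e⟫) + s ^ 2 * (1 / 2 * ⟪e, Gc e⟫) := by
      intro s hs0 hs1
      have hmem : yhat + s • e ∈ S := by
        have hc := hconv hyhatmem hz (by linarith : (0:ℝ) ≤ 1 - s) (le_of_lt hs0) (by ring)
        have : (1 - s) • yhat + s • z = yhat + s • e := by
          rw [hedef, smul_sub, sub_smul, one_smul]; abel
        rwa [this] at hc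
      have h := hyhat (yhat + s • e)
      rw [hΘ yhat hyhatmem, hΘ _ hmem, EReal.coe_le_coe_iff] at h
      rw [hq_expand yhat e s] at h
      linarith
    have h0 := aux_limit2 _ _ key
    have hre : ⟪gradient f x + Gc (yhat - x), e⟫ =
        ⟪gradient f x, e⟫ + ⟪yhat - x, Gc e⟫ := by
      rw [inner_add_left]
      congr 1
      rw [real_inner_comm, hGc, hGc]
      exact symm_inner hGsym e (yhat - x)
    rw [hre]; exact h0
  -- the map ψ and φ
  set ψ : (EuclideanSpace ℝ (Fin n)) → (EuclideanSpace ℝ (Fin n)) := fun y => y - mubar⁻¹ • (Gc (y - x) + gradient f x) with hψdef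
  set φ : (EuclideanSpace ℝ (Fin n)) → (EuclideanSpace ℝ (Fin n)) := fun y => projCC S (ψ y) with hφdef
  have hψcont : Continuous ψ := by
    apply Continuous.sub continuous_id
    exact Continuous.fun_const_smul (g := fun y => Gc (y - x) + gradient f x) ((hGccont.comp (continuous_id.sub continuous_const)).add continuous_const) _
  have hφcont : Continuous φ := by
    have hlip : LipschitzWith 1 (projCC S) := by
      apply LipschitzWith.of_dist_le_mul
      intro w1 w2
      rw [dist_eq_norm, dist_eq_norm, NNReal.coe_one, one_mul]
      exact projCC_lip hne' hcpt hconv w1 w2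
    exact hlip.continuous.comp hψcont
  -- fixed point
  have hφyhat : φ yhat = yhat := by
    apply projCC_fix hne' hcpt hconv _ _ hyhatmem
    intro z hz
    have : ψ yhat - yhat = -(mubar⁻¹ • (Gc (yhat - x) + gradient f x)) := by
      rw [hψdef]; simp only; abel
    rw [this, inner_neg_left, real_inner_smul_left]
    have h1 : 0 ≤ ⟪Gc (yhat - x) + gradient f x, z - yhat⟫ := by
      have := hVIyhat z hz
      rwa [show gradient f x + Gc (yhat - x) = Gc (yhat - x) + gradient f x from add_comm _ _] at this
    have h2 : 0 ≤ mubar⁻¹ := le_of_lt (inv_pos.mpr hmubar)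
    nlinarith
  -- RHS positivity
  set RHS : ℝ := min mubar⁻¹ 1 / 2 *
      min ‖mubar • (x - xbar)‖ (‖mubar • (x - xbar)‖ ^ (1 + ς)) with hRHSdef
  have hnormpos : 0 < ‖mubar • (x - xbar)‖ :=
    norm_pos_iff.mpr (smul_ne_zero hmubar.ne' (sub_ne_zero.mpr hne))
  have hRHSpos : 0 < RHS := by
    apply mul_pos
    · have : 0 < min mubar⁻¹ 1 := lt_min (inv_pos.mpr hmubar) one_pos
      linarith
    · exact lt_min hnormpos (Real.rpow_pos_of_pos hnormpos _)
  -- the open set U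
  set U : Set (EuclideanSpace ℝ (Fin n)) := {y | q (φ y) < f x ∧ ‖mubar • (y - φ y) - Gc (y - φ y)‖ < RHS} with hUdef
  have hUopen : IsOpen U := by
    apply IsOpen.inter
    · exact isOpen_lt (hqcont.comp hφcont) continuous_const
    · have hc : Continuous fun y : EuclideanSpace ℝ (Fin n) =>
          ‖mubar • (y - φ y) - Gc (y - φ y)‖ :=
        Continuous.norm (Continuous.sub (Continuous.fun_const_smul (g := fun y => y - φ y) (continuous_id.sub hφcont) _)
          (hGccont.comp (continuous_id.sub hφcont)))
      exact isOpen_lt hc continuous_const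
  have hyhatU : yhat ∈ U := by
    constructor
    · rw [hφyhat]; exact hqyhat
    · rw [hφyhat, sub_self, smul_zero, map_zero, sub_zero, norm_zero]; exact hRHSpos
  obtain ⟨δ, hδpos, hball⟩ := Metric.isOpen_iff.mp hUopen yhat hyhatU
  refine ⟨δ, hδpos, fun y hy y' hy' => ?_⟩
  have hyU : y ∈ U := hball (mem_ball_iff_norm.mpr hy)
  -- y' = φ y
  have hy'eq : y' = φ y := by
    rw [hy', hR]
    have h1 : (y - mubar⁻¹ • (toEuc (G.mulVec (y - x)) + gradient f x)) = ψ y := by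
      rw [hψdef]; simp only; rw [hGc]; rfl
    rw [h1]
    rw [smul_smul, inv_mul_cancel₀ hmubar.ne', one_smul]
    rw [hφdef]; simp only; abel
  have hy'S : y' ∈ S := by rw [hy'eq, hφdef]; exact (projCC_spec hne' hcpt (ψ y)).1
  refine ⟨hy'S, ?_, ?_⟩
  -- Theta comparison
  · rw [hΘ y' hy'S, hΘ x hxS, hqx, EReal.coe_le_coe_iff]
    have := hyU.1
    rw [← hy'eq] at this
    linarith
  -- dist bound
  · set wvec : (EuclideanSpace ℝ (Fin n)) := mubar • (ψ y - y') with hwdef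
    have hwv : wvec ∈ normalCone S y' := by
      intro z hz
      have hVI := projCC_VI hne' hcpt hconv (ψ y) z hz
      have hφy : φ y = projCC S (ψ y) := rfl
      rw [← hφy, ← hy'eq] at hVI
      show ⟪wvec, z - y'⟫ ≤ 0
      rw [hwdef, real_inner_smul_left]
      nlinarith [hmubar.le]
    set e : (EuclideanSpace ℝ (Fin n)) := gradient f x + toEuc (G.mulVec (y' - x)) + wvec with hedef
    have hemem : e ∈ {v | ∃ w ∈ normalCone S y',
        v = gradient f x + toEuc (G.mulVec (y' - x)) + w} := ⟨wvec, hwv, rfl⟩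
    have hdist := Metric.infDist_le_dist_of_mem (x := (0 : EuclideanSpace ℝ (Fin n))) hemem
    rw [dist_zero_left] at hdist
    -- compute e
    have he : e = mubar • (y - y') - Gc (y - y') := by
      rw [hedef, hwdef, hψdef]
      simp only
      rw [show y - mubar⁻¹ • (Gc (y - x) + gradient f x) - y'
          = (y - y') - mubar⁻¹ • (Gc (y - x) + gradient f x) from by abel]
      rw [smul_sub, smul_smul, mul_inv_cancel₀ hmubar.ne', one_smul]
      rw [show toEuc (G.mulVec (y' - x)) = Gc (y' - x) from rfl]
      rw [show Gc (y - y') = Gc (y - x) - Gc (y' - x) from by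
        rw [← map_sub]; congr 1; abel]
      abel
    rw [he] at hdist
    have hlt : ‖mubar • (y - y') - Gc (y - y')‖ < RHS := by
      rw [hy'eq]; exact hyU.2
    exact le_trans hdist (le_of_lt hlt)

end
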